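/- arXiv:2503.09752 — 3 statements merged into one kernel-verified Lean document; each statement's English description precedes it below -/
import Mathlib

section
/- Let K be a number field and let c, d : M → ℝ be two consistent maps (where M indexes pairs (L, w) of number fields with a place). If c(L, w) = d(L, w) for all finite extensions L/K and all places w of L, then c = d, i.e., c(L', w') = d(L', w') for every number field L' and every place w' of L'. -/
/-- A system of number fields and places: `NF` indexes number fields, `ext K L` means
`L` is a (finite) extension of `K`, `Place K` is the set of places of `K`, `below h w`
is the place of `K` lying below the place `w` of `L`, and for each place `v` of `K`
there are finitely many places of `L` above `v`. -/
structure PlaceSystem where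
  NF : Type
  ext : NF → NF → Prop
  ext_refl : ∀ K, ext K K
  Place : NF → Type
  below : ∀ {K L : NF}, ext K L → Place L → Place K
  finAbove : ∀ {K L : NF} (h : ext K L) (v : Place K),
    Fintype {w : Place L // below h w = v}
  /-- any two number fields admit a common finite extension (compositum) -/
  directed : ∀ K L, ∃ M, ext K M ∧ ext L M

/-- A map `c` on pairs (number field, place) is consistent if
`c(K,v) = ∑_{w ∣ v} c(L,w)` for every finite extension `L/K`. -/
def PlaceSystem.Consistent (P : PlaceSystem) (c : ∀ K : P.NF, P.Place K → ℝ) : Prop :=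
  ∀ (K L : P.NF) (h : P.ext K L) (v : P.Place K),
    c K v = (letI := P.finAbove h v; ∑ w : {w : P.Place L // P.below h w = v}, c L w.1)

/-- If two consistent maps agree on all finite extensions of a fixed number field `K`,
then they agree on every number field. -/
theorem stmt_7 (P : PlaceSystem) (c d : ∀ K : P.NF, P.Place K → ℝ)
    (hc : P.Consistent c) (hd : P.Consistent d) (K : P.NF)
    (hagree : ∀ (L : P.NF) (h : P.ext K L) (w : P.Place L), c L w = d L w) :
    ∀ (L' : P.NF) (w' : P.Place L'), c L' w' = d L' w' := by
  intro L' w'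
  obtain ⟨M, hKM, hLM⟩ := P.directed K L'
  rw [hc L' M hLM w', hd L' M hLM w']
  exact Finset.sum_congr rfl fun w _ => hagree M hKM w.1
end

section
/- Let c be a consistent map and α a nonzero algebraic number. If K and L are two number fields both containing α, then Σ_{v ∈ M_K} c(K, v) log‖α‖_v = Σ_{w ∈ M_L} c(L, w) log‖α‖_w. In particular Φ_c(α) := Σ_{v ∈ M_K} c(K, v) log‖α‖_v is well-defined independently of the field K containing α. -/
theorem key (P : PlaceSystem) (A : Type) (mem : A → P.NF → Prop)
    (logv : ∀ K : P.NF, P.Place K → A → ℝ)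
    (hcompat : ∀ {K L : P.NF} (h : P.ext K L) (w : P.Place L) (α : A),
      mem α K → logv L w α = logv K (P.below h w) α)
    (hsupp : ∀ (K : P.NF) (α : A), mem α K →
      (Function.support fun v : P.Place K => logv K v α).Finite)
    (c : ∀ K : P.NF, P.Place K → ℝ) (hc : P.Consistent c)
    (α : A) (K M : P.NF) (h : P.ext K M) (hK : mem α K) :
    ∑ᶠ v : P.Place K, c K v * logv K v α = ∑ᶠ w : P.Place M, c M w * logv M w α := by
  classical
  have hS : (Function.support fun v : P.Place K => logv K v α).Finite := hsupp K α hK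
  set S : Finset (P.Place K) := hS.toFinset with hSdef
  have fib : ∀ v : P.Place K, ({w : P.Place M | P.below h w = v} : Set (P.Place M)).Finite := by
    intro v
    haveI := P.finAbove h v
    exact Set.finite_coe_iff.mp (Finite.of_fintype {w : P.Place M // P.below h w = v})
  set T : Finset (P.Place M) := S.biUnion (fun v => (fib v).toFinset) with hTdef
  have hLHS : ∑ᶠ v : P.Place K, c K v * logv K v α = ∑ v ∈ S, c K v * logv K v α := by
    apply finsum_eq_sum_of_support_subset
    intro v hv
    have : logv K v α ≠ 0 := by
      intro h0
      simp [Function.mem_support, h0] at hv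
    simpa [hSdef, hS.mem_toFinset] using this
  have hRHS : ∑ᶠ w : P.Place M, c M w * logv M w α = ∑ w ∈ T, c M w * logv M w α := by
    apply finsum_eq_sum_of_support_subset
    intro w hw
    have hlog : logv M w α ≠ 0 := by
      intro h0
      simp [Function.mem_support, h0] at hw
    have hK0 : logv K (P.below h w) α ≠ 0 := by
      rw [← hcompat h w α hK]; exact hlog
    refine Finset.mem_coe.2 (Finset.mem_biUnion.2 ⟨P.below h w, ?_, ?_⟩)
    · simpa [hSdef, hS.mem_toFinset] using hK0
    · simp [(fib _).mem_toFinset]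
  rw [hLHS, hRHS]
  rw [Finset.sum_biUnion]
  · refine Finset.sum_congr rfl fun v _ => ?_
    have step1 : ∀ w ∈ (fib v).toFinset, c M w * logv M w α = c M w * logv K v α := by
      intro w hw
      have hwv : P.below h w = v := by simpa [(fib v).mem_toFinset] using hw
      rw [hcompat h w α hK, hwv]
    rw [Finset.sum_congr rfl step1, ← Finset.sum_mul]
    congr 1
    rw [hc K M h v]
    exact (Finset.sum_subtype (F := P.finAbove h v) (fib v).toFinset
      (fun w => by simp [(fib v).mem_toFinset]) (fun w => c M w)).symm
  · intro v₁ _ v₂ _ hne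
    simp only [Finset.disjoint_left]
    intro w hw1 hw2
    apply hne
    have h1 : P.below h w = v₁ := by simpa [(fib v₁).mem_toFinset] using hw1
    have h2 : P.below h w = v₂ := by simpa [(fib v₂).mem_toFinset] using hw2
    rw [← h1, h2]

/-- Let `A` be the nonzero algebraic numbers, `mem α K` meaning `α ∈ K`, and
`logv K v α = log‖α‖_v` (with `‖·‖_w` extending `‖·‖_v` for `w ∣ v`, and only
finitely many places of `K` with `log‖α‖_v ≠ 0`).  For a consistent map `c`, the
quantity `Φ_c(α) = ∑_{v ∈ M_K} c(K,v) log‖α‖_v` does not depend on the number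
field `K` containing `α`. -/
theorem stmt_11 (P : PlaceSystem) (A : Type) (mem : A → P.NF → Prop)
    (logv : ∀ K : P.NF, P.Place K → A → ℝ)
    (hmem_mono : ∀ {α : A} {K L : P.NF}, P.ext K L → mem α K → mem α L)
    (hcompat : ∀ {K L : P.NF} (h : P.ext K L) (w : P.Place L) (α : A),
      mem α K → logv L w α = logv K (P.below h w) α)
    (hsupp : ∀ (K : P.NF) (α : A), mem α K →
      (Function.support fun v : P.Place K => logv K v α).Finite)
    (c : ∀ K : P.NF, P.Place K → ℝ) (hc : P.Consistent c)
    (α : A) (K L : P.NF) (hK : mem α K) (hL : mem α L) :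
    ∑ᶠ v : P.Place K, c K v * logv K v α = ∑ᶠ w : P.Place L, c L w * logv L w α := by
  obtain ⟨M, hKM, hLM⟩ := P.directed K L
  rw [key P A mem logv @hcompat hsupp c hc α K M hKM hK,
      key P A mem logv @hcompat hsupp c hc α L M hLM hL]
end

section
/- Let K be a number field, v a place of K, and suppose there exists β ∈ K with ‖β‖_v < 1 and ‖β‖_w = 1 for all non-Archimedean places w ≠ v. Let c be a consistent map such that Φ_c(β) = 0 and c(K, u) = c(ℚ, ∞)·[K_u : ℚ_∞]/[K : ℚ] for all Archimedean places u of K. Then c(K, v) = c(ℚ, ∞)·[K_v : ℚ_v]/[K : ℚ]. -/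
/-- Let `P` be the places of a number field `K`, `arch` the Archimedean ones,
`v` a non-Archimedean place, `lam w = [K_w : ℚ_w]/[K : ℚ]`, and `nβ w = ‖β‖_w` for
an element `β ∈ K` with `‖β‖_v < 1` and `‖β‖_w = 1` for all non-Archimedean
`w ≠ v`.  Suppose the consistent map `c` satisfies `Φ_c(β) = 0` and
`c(K,u) = c(ℚ,∞)·λ(K,u)` for all Archimedean `u` (here `r = c(ℚ,∞)`), and the
product formula `∑_w λ(K,w) log‖β‖_w = 0` holds.  Then `c(K,v) = c(ℚ,∞)·λ(K,v)`. -/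
theorem stmt_15 (P : Type) (arch : P → Prop) (v : P) (hv : ¬ arch v)
    (nβ : P → ℝ) (hpos : ∀ w, 0 < nβ w) (hβv : nβ v < 1)
    (hβw : ∀ w, ¬ arch w → w ≠ v → nβ w = 1)
    (hfin : (Function.support fun w => Real.log (nβ w)).Finite)
    (c lam : P → ℝ) (r : ℝ)
    (harch : ∀ u, arch u → c u = r * lam u)
    (hprod : ∑ᶠ w, lam w * Real.log (nβ w) = 0)
    (hPhi : ∑ᶠ w, c w * Real.log (nβ w) = 0) :
    c v = r * lam v := by
  set f : P → ℝ := fun w => (c w - r * lam w) * Real.log (nβ w) with hf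
  have hsub : ∀ (g : P → ℝ),
      (Function.support fun w => g w * Real.log (nβ w)) ⊆
        Function.support fun w => Real.log (nβ w) := by
    intro g w hw h0
    exact hw (by simp [h0])
  have hfsum : ∑ᶠ w, f w = 0 := by
    have h1 : ∑ᶠ w, f w =
        (∑ᶠ w, c w * Real.log (nβ w)) - ∑ᶠ w, (r * lam w) * Real.log (nβ w) := by
      rw [← finsum_sub_distrib (hfin.subset (hsub c)) (hfin.subset (hsub (fun w => r * lam w)))]
      congr 1
      ext w
      ring
    have h2 : ∑ᶠ w, (r * lam w) * Real.log (nβ w) = 0 := by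
      have : ∀ w, (r * lam w) * Real.log (nβ w) = r * (lam w * Real.log (nβ w)) := by
        intro w; ring
      simp_rw [this]
      rw [← mul_finsum _ r, hprod, mul_zero]
    rw [h1, h2, hPhi, sub_zero]
  have hzero : ∀ w, w ≠ v → f w = 0 := by
    intro w hw
    by_cases ha : arch w
    · simp [hf, harch w ha]
    · simp [hf, hβw w ha hw]
  have : f v = 0 := by
    rw [← finsum_eq_single f v fun w h => hzero w h, hfsum]
  have hlog : Real.log (nβ v) ≠ 0 :=
    ne_of_lt (Real.log_neg (hpos v) hβv)
  have := mul_eq_zero.mp this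
  rcases this with h | h
  · linarith [sub_eq_zero.mp h]
  · exact absurd h hlog
end
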